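/- Optimality computation for the beam-splitter: for η ∈ [0,1] and a, b > 0, the 6×6 covariance matrix σ⁽ⁿ⁾ with block structure [[n²(η/a + (1-η)/b)·I₂, n√(η(n²/a² - 1))·T, n√((1-η)(n²/b² - 1))·T], [·, (n²/a)·I₂, 0], [·, 0, (n²/b)·I₂]] (symmetric, T = diag(1,-1)) has determinant det σ⁽ⁿ⁾ = (n⁴(ηa + (1-η)b)/(ab))²·(1 + o(1)) as n → ∞; precisely lim_{n→∞} det σ⁽ⁿ⁾ · (ab)²/n⁸(ηa+(1-η)b)² = 1. -/
import Mathlib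


open Real Matrix Filter

def permE : Fin 6 ≃ Fin 6 where
  toFun := ![0, 2, 4, 1, 3, 5]
  invFun := ![0, 3, 1, 4, 2, 5]
  left_inv := by decide
  right_inv := by decide

lemma det6_aux (c p q x y : ℝ) :
    (!![c, 0, x, 0, y, 0;
        0, c, 0, -x, 0, -y;
        x, 0, p, 0, 0, 0;
        0, -x, 0, p, 0, 0;
        y, 0, 0, 0, q, 0;
        0, -y, 0, 0, 0, q] : Matrix (Fin 6) (Fin 6) ℝ).det
    = (c*p*q - x^2*q - y^2*p)^2 := by
  set M : Matrix (Fin 6) (Fin 6) ℝ :=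
    !![c, 0, x, 0, y, 0;
       0, c, 0, -x, 0, -y;
       x, 0, p, 0, 0, 0;
       0, -x, 0, p, 0, 0;
       y, 0, 0, 0, q, 0;
       0, -y, 0, 0, 0, q] with hM
  set e : Fin 3 ⊕ Fin 3 ≃ Fin 6 := finSumFinEquiv.trans permE with he
  have hsub : M.submatrix e e
      = Matrix.fromBlocks
          (!![c, x, y; x, p, 0; y, 0, q])
          (0 : Matrix (Fin 3) (Fin 3) ℝ)
          (0 : Matrix (Fin 3) (Fin 3) ℝ)
          (!![c, -x, -y; -x, p, 0; -y, 0, q]) := by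
    ext i j
    rcases i with i | i <;> rcases j with j | j <;> fin_cases i <;> fin_cases j <;> rfl
  have h1 := Matrix.det_submatrix_equiv_self e M
  rw [hsub] at h1
  rw [← h1, Matrix.det_fromBlocks_zero₁₂, Matrix.det_fin_three, Matrix.det_fin_three]
  simp [Matrix.cons_val_zero, Matrix.cons_val_one]
  ring

/-- Optimality computation for the beam-splitter: for `η ∈ [0,1]` and `a, b > 0`, the
6×6 covariance matrix `σ⁽ⁿ⁾` of the output state `γ⁽ⁿ⁾_{CA'B'}` satisfies
`det σ⁽ⁿ⁾ · (ab)² / (n⁸(ηa + (1-η)b)²) → 1` as `n → ∞`. -/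
theorem beam_splitter_optimality_det (η a b : ℝ) (hη : η ∈ Set.Icc (0:ℝ) 1)
    (ha : 0 < a) (hb : 0 < b) :
    Tendsto (fun n : ℕ =>
      (!![(n:ℝ)^2*(η/a + (1-η)/b), 0, (n:ℝ)*Real.sqrt (η*((n:ℝ)^2/a^2 - 1)), 0,
            (n:ℝ)*Real.sqrt ((1-η)*((n:ℝ)^2/b^2 - 1)), 0;
          0, (n:ℝ)^2*(η/a + (1-η)/b), 0, -((n:ℝ)*Real.sqrt (η*((n:ℝ)^2/a^2 - 1))), 0,
            -((n:ℝ)*Real.sqrt ((1-η)*((n:ℝ)^2/b^2 - 1)));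
          (n:ℝ)*Real.sqrt (η*((n:ℝ)^2/a^2 - 1)), 0, (n:ℝ)^2/a, 0, 0, 0;
          0, -((n:ℝ)*Real.sqrt (η*((n:ℝ)^2/a^2 - 1))), 0, (n:ℝ)^2/a, 0, 0;
          (n:ℝ)*Real.sqrt ((1-η)*((n:ℝ)^2/b^2 - 1)), 0, 0, 0, (n:ℝ)^2/b, 0;
          0, -((n:ℝ)*Real.sqrt ((1-η)*((n:ℝ)^2/b^2 - 1))), 0, 0, 0, (n:ℝ)^2/b]
        : Matrix (Fin 6) (Fin 6) ℝ).det
        * (a*b)^2 / ((n:ℝ)^8 * (η*a + (1-η)*b)^2))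
      atTop (nhds 1) := by
  obtain ⟨h0, h1⟩ := hη
  have hD : 0 < η*a + (1-η)*b := by
    rcases eq_or_lt_of_le h0 with h | h
    · nlinarith
    · nlinarith [mul_pos h ha, mul_nonneg (sub_nonneg.2 h1) hb.le]
  obtain ⟨N, hN⟩ := exists_nat_ge (max a b)
  apply Tendsto.congr' _ tendsto_const_nhds
  filter_upwards [eventually_ge_atTop (max N 1)] with n hn
  have hn1 : (1:ℝ) ≤ (n:ℝ) := by exact_mod_cast le_trans (le_max_right N 1) hn
  have hna : a ≤ (n:ℝ) := by
    refine le_trans (le_trans (le_max_left a b) hN) ?_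
    exact_mod_cast le_trans (le_max_left N 1) hn
  have hnb : b ≤ (n:ℝ) := by
    refine le_trans (le_trans (le_max_right a b) hN) ?_
    exact_mod_cast le_trans (le_max_left N 1) hn
  have hn0 : (n:ℝ) ≠ 0 := by linarith
  have hxa : 0 ≤ η*((n:ℝ)^2/a^2 - 1) := by
    have h : a^2 ≤ (n:ℝ)^2 := by nlinarith
    have : (1:ℝ) ≤ (n:ℝ)^2/a^2 := (one_le_div (by positivity)).2 h
    have : (0:ℝ) ≤ (n:ℝ)^2/a^2 - 1 := by linarith
    exact mul_nonneg h0 this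
  have hxb : 0 ≤ (1-η)*((n:ℝ)^2/b^2 - 1) := by
    have h : b^2 ≤ (n:ℝ)^2 := by nlinarith
    have : (1:ℝ) ≤ (n:ℝ)^2/b^2 := (one_le_div (by positivity)).2 h
    have : (0:ℝ) ≤ (n:ℝ)^2/b^2 - 1 := by linarith
    exact mul_nonneg (by linarith) this
  have hx2 : ((n:ℝ)*Real.sqrt (η*((n:ℝ)^2/a^2 - 1)))^2
      = (n:ℝ)^2 * (η*((n:ℝ)^2/a^2 - 1)) := by
    rw [mul_pow, Real.sq_sqrt hxa]
  have hy2 : ((n:ℝ)*Real.sqrt ((1-η)*((n:ℝ)^2/b^2 - 1)))^2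
      = (n:ℝ)^2 * ((1-η)*((n:ℝ)^2/b^2 - 1)) := by
    rw [mul_pow, Real.sq_sqrt hxb]
  rw [det6_aux, hx2, hy2]
  field_simp
  ring
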